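/- arXiv:1708.00285 — 3 statements merged into one kernel-verified Lean document; each statement's English description precedes it below -/
import Mathlib

section
/- The function f(x) = Σ_{k=0}^∞ 2^k χ_{A_k}(x) sgn(x) on ℝ, where A_k = {x : 2^k < |x| ≤ 2^k + 1}, satisfies f_{B(0,r)} = 0 for every r > 0 and sup_{r>0} |B(0,r)|^{-1} ∫_{B(0,r)} |f(x) − f_{B(0,r)}| dx < ∞, i.e., f belongs to CBMO^1(ℝ). -/
open MeasureTheory Metric

/-- The function `f(x) = Σ_{k=0}^∞ 2^k χ_{A_k}(x) sgn(x)` on `ℝ`,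
where `A_k = {x : 2^k < |x| ≤ 2^k + 1}`. -/
noncomputable def paperF : ℝ → ℝ := fun x =>
  Real.sign x *
    ∑' k : ℕ, Set.indicator {y : ℝ | 2 ^ k < |y| ∧ |y| ≤ 2 ^ k + 1}
      (fun _ => (2 : ℝ) ^ k) x

/-- The k-th summand. -/
noncomputable def paperG (k : ℕ) : ℝ → ℝ :=
  Set.indicator {y : ℝ | 2 ^ k < |y| ∧ |y| ≤ 2 ^ k + 1} (fun _ => (2 : ℝ) ^ k)

/-- The absolute-value part of `paperF`. -/
noncomputable def paperS : ℝ → ℝ := fun x => ∑' k : ℕ, paperG k x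

lemma paperF_eq (x : ℝ) : paperF x = Real.sign x * paperS x := rfl

lemma measurableSet_A (k : ℕ) :
    MeasurableSet {y : ℝ | 2 ^ k < |y| ∧ |y| ≤ 2 ^ k + 1} := by
  apply MeasurableSet.inter
  · exact measurableSet_lt measurable_const measurable_norm
  · exact measurableSet_le measurable_norm measurable_const

lemma paperG_nonneg (k : ℕ) (x : ℝ) : 0 ≤ paperG k x :=
  Set.indicator_nonneg (fun _ _ => by positivity) x

lemma paperS_nonneg (x : ℝ) : 0 ≤ paperS x :=
  tsum_nonneg fun k => paperG_nonneg k x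

lemma paperS_neg (x : ℝ) : paperS (-x) = paperS x := by
  unfold paperS paperG
  congr 1
  funext k
  simp [Set.indicator_apply, abs_neg]

lemma paperF_neg (x : ℝ) : paperF (-x) = -paperF x := by
  rw [paperF_eq, paperF_eq, paperS_neg, Real.sign_neg, neg_mul]

lemma abs_paperF_le (x : ℝ) : |paperF x| ≤ paperS x := by
  rw [paperF_eq, abs_mul]
  have h1 : |Real.sign x| ≤ 1 := by
    rcases Real.sign_apply_eq x with h | h | h <;> rw [h] <;> norm_num
  have h2 : |paperS x| = paperS x := abs_of_nonneg (paperS_nonneg x)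
  calc |Real.sign x| * |paperS x| ≤ 1 * |paperS x| :=
        mul_le_mul_of_nonneg_right h1 (abs_nonneg _)
    _ = paperS x := by rw [one_mul, h2]

lemma integral_ball_paperF (r : ℝ) : ∫ x in ball (0 : ℝ) r, paperF x = 0 := by
  set F := (ball (0 : ℝ) r).indicator paperF with hFdef
  have hmem : ∀ x : ℝ, -x ∈ ball (0 : ℝ) r ↔ x ∈ ball (0 : ℝ) r := by
    intro x; simp [mem_ball_zero_iff]
  have hF : ∀ x, F (-x) = -F x := by
    intro x
    by_cases hx : x ∈ ball (0 : ℝ) r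
    · rw [hFdef, Set.indicator_of_mem ((hmem x).2 hx), Set.indicator_of_mem hx,
        paperF_neg]
    · rw [hFdef, Set.indicator_of_notMem (fun h => hx ((hmem x).1 h)),
        Set.indicator_of_notMem hx, neg_zero]
  have h1 : ∫ x, F (-x) = ∫ x, F x := integral_neg_eq_self F volume
  have h2 : ∫ x, F (-x) = -∫ x, F x := by
    simp only [hF]; exact integral_neg F
  have h3 : ∫ x, F x = 0 := by linarith [h1.symm.trans h2]
  rw [← integral_indicator measurableSet_ball]
  exact h3

lemma average_ball_paperF (r : ℝ) : (⨍ x in ball (0 : ℝ) r, paperF x) = 0 := by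
  rw [setAverage_eq, integral_ball_paperF, smul_zero]

lemma integrable_paperG (k : ℕ) : Integrable (paperG k) := by
  unfold paperG
  rw [integrable_indicator_iff (measurableSet_A k)]
  refine integrableOn_const (ne_of_lt ?_)
  calc volume {y : ℝ | 2 ^ k < |y| ∧ |y| ≤ 2 ^ k + 1}
      ≤ volume (Set.Ioc ((2:ℝ)^k) (2^k+1) ∪ Set.Ico (-(2^k+1)) (-(2^k : ℝ))) := by
        apply measure_mono
        intro y ⟨h1, h2⟩
        rcases le_or_gt 0 y with hy | hy
        · left; rw [abs_of_nonneg hy] at h1 h2; exact ⟨h1, h2⟩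
        · right; rw [abs_of_neg hy] at h1 h2
          constructor <;> linarith
    _ ≤ volume (Set.Ioc ((2:ℝ)^k) (2^k+1)) + volume (Set.Ico (-(2^k+1)) (-(2^k : ℝ))) :=
        measure_union_le _ _
    _ < ⊤ := by
        rw [Real.volume_Ioc, Real.volume_Ico]
        exact ENNReal.add_lt_top.2 ⟨ENNReal.ofReal_lt_top, ENNReal.ofReal_lt_top⟩

lemma volume_A_le (k : ℕ) :
    (volume {y : ℝ | 2 ^ k < |y| ∧ |y| ≤ 2 ^ k + 1}).toReal ≤ 2 := by
  have h : volume {y : ℝ | 2 ^ k < |y| ∧ |y| ≤ 2 ^ k + 1} ≤ ENNReal.ofReal 2 := by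
    calc volume {y : ℝ | 2 ^ k < |y| ∧ |y| ≤ 2 ^ k + 1}
        ≤ volume (Set.Ioc ((2:ℝ)^k) (2^k+1) ∪ Set.Ico (-(2^k+1)) (-(2^k : ℝ))) := by
          apply measure_mono
          intro y ⟨h1, h2⟩
          rcases le_or_gt 0 y with hy | hy
          · left; rw [abs_of_nonneg hy] at h1 h2; exact ⟨h1, h2⟩
          · right; rw [abs_of_neg hy] at h1 h2
            constructor <;> linarith
      _ ≤ volume (Set.Ioc ((2:ℝ)^k) (2^k+1)) + volume (Set.Ico (-(2^k+1)) (-(2^k : ℝ))) :=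
          measure_union_le _ _
      _ = ENNReal.ofReal 1 + ENNReal.ofReal 1 := by
          rw [Real.volume_Ioc, Real.volume_Ico]
          norm_num
      _ = ENNReal.ofReal 2 := by
          rw [← ENNReal.ofReal_add] <;> norm_num
  exact ENNReal.toReal_le_of_le_ofReal (by norm_num) h

lemma integral_paperG_le (k : ℕ) : ∫ x, paperG k x ≤ 2 * 2 ^ k := by
  unfold paperG
  rw [integral_indicator_const ((2:ℝ)^k) (measurableSet_A k)]
  rw [smul_eq_mul]
  calc (volume {y : ℝ | 2 ^ k < |y| ∧ |y| ≤ 2 ^ k + 1}).toReal * 2 ^ k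
      ≤ 2 * 2 ^ k := by
        apply mul_le_mul_of_nonneg_right (volume_A_le k) (by positivity)

lemma paperS_eq_sum {r : ℝ} {K : ℕ} (hK : r ≤ 2 ^ K) {x : ℝ} (hx : |x| < r) :
    paperS x = ∑ k ∈ Finset.range K, paperG k x := by
  apply tsum_eq_sum
  intro k hk
  have hKk : K ≤ k := by simpa using hk
  have h2 : (2:ℝ) ^ K ≤ 2 ^ k := pow_le_pow_right₀ one_le_two hKk
  apply Set.indicator_of_notMem
  intro ⟨h1, _⟩
  linarith

lemma exists_good_K {r : ℝ} (hr : 1 < r) : ∃ K : ℕ, r ≤ 2 ^ K ∧ (2:ℝ) ^ K ≤ 2 * r := by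
  classical
  obtain ⟨n, hn⟩ := pow_unbounded_of_one_lt r (one_lt_two (α := ℝ))
  have h : ∃ m : ℕ, r ≤ 2 ^ m := ⟨n, hn.le⟩
  refine ⟨Nat.find h, Nat.find_spec h, ?_⟩
  rcases Nat.eq_zero_or_pos (Nat.find h) with h0 | h0
  · rw [h0]; norm_num; linarith
  · have hmin := Nat.find_min h (Nat.sub_lt h0 one_pos)
    push_neg at hmin
    have heq : (2:ℝ) ^ Nat.find h = 2 * 2 ^ (Nat.find h - 1) := by
      rw [← pow_succ']
      congr 1
      omega
    rw [heq]
    nlinarith [hmin]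

lemma integral_ball_paperS_le {r : ℝ} (hr : 0 < r) :
    ∫ x in ball (0 : ℝ) r, paperS x ≤ 2 * (volume (ball (0 : ℝ) r)).toReal := by
  have hvol : (volume (ball (0 : ℝ) r)).toReal = 2 * r := by
    rw [Real.volume_ball, ENNReal.toReal_ofReal (by linarith)]
  rcases le_or_gt r 1 with hr1 | hr1
  · -- integrand is 0 on the ball
    have hz : ∀ x ∈ ball (0 : ℝ) r, paperS x = 0 := by
      intro x hx
      rw [mem_ball_zero_iff, Real.norm_eq_abs] at hx
      rw [paperS_eq_sum (K := 0) (by simpa using hr1) hx, Finset.range_zero,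
        Finset.sum_empty]
    rw [setIntegral_congr_fun measurableSet_ball hz]
    simp
  · obtain ⟨K, hK1, hK2⟩ := exists_good_K hr1
    have heq : ∀ x ∈ ball (0 : ℝ) r, paperS x = ∑ k ∈ Finset.range K, paperG k x := by
      intro x hx
      rw [mem_ball_zero_iff, Real.norm_eq_abs] at hx
      exact paperS_eq_sum hK1 hx
    rw [setIntegral_congr_fun measurableSet_ball heq]
    rw [integral_finset_sum _ (fun k _ => (integrable_paperG k).integrableOn)]
    calc ∑ k ∈ Finset.range K, ∫ x in ball (0:ℝ) r, paperG k x
        ≤ ∑ k ∈ Finset.range K, (2 * 2 ^ k : ℝ) := by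
          apply Finset.sum_le_sum
          intro k _
          calc ∫ x in ball (0:ℝ) r, paperG k x
              ≤ ∫ x, paperG k x :=
                setIntegral_le_integral (integrable_paperG k)
                  (Filter.Eventually.of_forall (paperG_nonneg k))
            _ ≤ 2 * 2 ^ k := integral_paperG_le k
      _ = 2 * ∑ k ∈ Finset.range K, (2:ℝ) ^ k := by rw [Finset.mul_sum]
      _ = 2 * (2 ^ K - 1) := by rw [geom_sum_eq (by norm_num)]; norm_num
      _ ≤ 2 * (2 * r) := by nlinarith
      _ = 2 * (volume (ball (0 : ℝ) r)).toReal := by rw [hvol]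

lemma integrableOn_paperS {r : ℝ} (hr : 0 < r) :
    IntegrableOn paperS (ball (0 : ℝ) r) := by
  obtain ⟨K, hK⟩ : ∃ K : ℕ, r ≤ 2 ^ K := by
    obtain ⟨n, hn⟩ := pow_unbounded_of_one_lt r (one_lt_two (α := ℝ))
    exact ⟨n, hn.le⟩
  have heq : ∀ x ∈ ball (0 : ℝ) r, paperS x = ∑ k ∈ Finset.range K, paperG k x := by
    intro x hx
    rw [mem_ball_zero_iff, Real.norm_eq_abs] at hx
    exact paperS_eq_sum hK hx
  apply IntegrableOn.congr_fun _ (fun x hx => (heq x hx).symm) measurableSet_ball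
  exact (integrable_finset_sum _ (fun k _ => integrable_paperG k)).integrableOn

/-- `paperF` has average `0` over every ball `B(0,r)` and its central
`L¹` mean oscillations are uniformly bounded, i.e. `paperF ∈ CBMO¹(ℝ)`. -/
theorem paperF_mem_central_bmo_one :
    (∀ r : ℝ, 0 < r → (⨍ x in ball (0 : ℝ) r, paperF x) = 0) ∧
    ∃ C : ℝ, ∀ r : ℝ, 0 < r →
      ∫ x in ball (0 : ℝ) r, |paperF x - ⨍ y in ball (0 : ℝ) r, paperF y| ≤
        C * (volume (ball (0 : ℝ) r)).toReal := by
  constructor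
  · intro r _
    exact average_ball_paperF r
  · refine ⟨2, fun r hr => ?_⟩
    have havg : (⨍ y in ball (0 : ℝ) r, paperF y) = 0 := average_ball_paperF r
    calc ∫ x in ball (0 : ℝ) r, |paperF x - ⨍ y in ball (0 : ℝ) r, paperF y|
        = ∫ x in ball (0 : ℝ) r, |paperF x| := by rw [havg]; simp
      _ ≤ ∫ x in ball (0 : ℝ) r, paperS x :=
          integral_mono_of_nonneg
            (Filter.Eventually.of_forall fun x => abs_nonneg _)
            (integrableOn_paperS hr)
            (Filter.Eventually.of_forall fun x => abs_paperF_le x)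
      _ ≤ 2 * (volume (ball (0 : ℝ) r)).toReal := integral_ball_paperS_le hr
end

section
/- Let 1 < p < ∞ and suppose b is locally integrable on ℝⁿ such that both commutators [b,H] and [b,H*] are bounded on L^p(ℝⁿ) with operator norm at most A. Then for every ball B = B(0,r) centered at the origin, (|B|^{-1} ∫_B |b(x) − b_B|^p dx)^{1/p} ≤ C·A, i.e., b ∈ CBMO^p(ℝⁿ). -/
open MeasureTheory Metric
open scoped ENNReal

abbrev En (n : ℕ) := EuclideanSpace ℝ (Fin n)

/-- The `n`-dimensional Hardy operator `Hf(x) = |x|^{-n} ∫_{|y| ≤ |x|} f(y) dy`. -/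
noncomputable def hardyOp (n : ℕ) (f : En n → ℝ) : En n → ℝ := fun x =>
  ‖x‖ ^ (-(n : ℝ)) * ∫ y in closedBall (0 : En n) ‖x‖, f y

/-- The dual Hardy operator `H*f(x) = ∫_{|y| > |x|} f(y)/|y|^n dy`. -/
noncomputable def dualHardyOp (n : ℕ) (f : En n → ℝ) : En n → ℝ := fun x =>
  ∫ y in {y : En n | ‖x‖ < ‖y‖}, f y / ‖y‖ ^ n

lemma enn_add_rpow_le {p : ℝ} (hp : 0 ≤ p) (x y : ℝ≥0∞) :
    (x + y) ^ p ≤ 2 ^ p * (x ^ p + y ^ p) := by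
  calc (x + y) ^ p ≤ (2 * (x ⊔ y)) ^ p := by
        apply ENNReal.rpow_le_rpow _ hp
        rw [two_mul]
        exact add_le_add le_sup_left le_sup_right
    _ = 2 ^ p * (x ⊔ y) ^ p := ENNReal.mul_rpow_of_nonneg _ _ hp
    _ ≤ 2 ^ p * (x ^ p + y ^ p) := by
        gcongr
        rcases le_total x y with h | h
        · rw [sup_eq_right.2 h]; exact le_add_self
        · rw [sup_eq_left.2 h]; exact self_le_add_right _ _

lemma enn_rpow_inv_rpow {p : ℝ} (hp0 : p ≠ 0) (x : ℝ≥0∞) : (x ^ (1/p)) ^ p = x := by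
  rw [← ENNReal.rpow_mul, one_div, inv_mul_cancel₀ hp0, ENNReal.rpow_one]

lemma lint_eq_eLpNorm_rpow {α : Type*} [MeasurableSpace α] {μ : Measure α} {p : ℝ}
    (hp0 : 0 < p) (f : α → ℝ) :
    ∫⁻ x, (‖f x‖₊ : ℝ≥0∞) ^ p ∂μ = eLpNorm f (ENNReal.ofReal p) μ ^ p := by
  simp only [← enorm_eq_nnnorm]
  rw [eLpNorm_eq_lintegral_rpow_enorm_toReal (by simp [ENNReal.ofReal_eq_zero, not_le, hp0])
    ENNReal.ofReal_ne_top, ENNReal.toReal_ofReal hp0.le, enn_rpow_inv_rpow hp0.ne']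

lemma sm_phi {n : ℕ} {b : En n → ℝ} (hb : StronglyMeasurable b) :
    StronglyMeasurable fun x : En n => ∫ y in closedBall (0 : En n) ‖x‖, b y := by
  have hF : StronglyMeasurable fun q : En n × En n =>
      Set.indicator {q : En n × En n | ‖q.2‖ ≤ ‖q.1‖} (fun q => b q.2) q := by
    exact (hb.comp_measurable measurable_snd).indicator
      (measurableSet_le measurable_snd.norm measurable_fst.norm)
  have h2 := hF.integral_prod_right' (ν := volume)
  have : (fun x : En n => ∫ y, Set.indicator {q : En n × En n | ‖q.2‖ ≤ ‖q.1‖}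
      (fun q => b q.2) (x, y)) = fun x : En n => ∫ y in closedBall (0 : En n) ‖x‖, b y := by
    funext x
    rw [← integral_indicator measurableSet_closedBall]
    congr 1
    funext y
    by_cases h : ‖y‖ ≤ ‖x‖
    · rw [Set.indicator_of_mem (show (x, y) ∈ {q : En n × En n | ‖q.2‖ ≤ ‖q.1‖} from h),
        Set.indicator_of_mem (mem_closedBall_zero_iff.2 h)]
    · rw [Set.indicator_of_notMem (show (x, y) ∉ {q : En n × En n | ‖q.2‖ ≤ ‖q.1‖} from h),
        Set.indicator_of_notMem (by simpa [mem_closedBall_zero_iff] using h)]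
  rwa [this] at h2

lemma key_central_bmo (n : ℕ) (hn : 0 < n) (p : ℝ) (hp : 1 < p) :
    ∃ C : ℝ, 0 < C ∧
      ∀ (b : En n → ℝ), StronglyMeasurable b → ∀ (A : ℝ), 0 ≤ A →
        (∀ r : ℝ, 0 < r → IntegrableOn b (ball (0 : En n) r) volume) →
        (∀ f : En n → ℝ, MemLp f (ENNReal.ofReal p) volume →
          eLpNorm (fun x => b x * hardyOp n f x - hardyOp n (fun y => b y * f y) x)
              (ENNReal.ofReal p) volume ≤
            ENNReal.ofReal A * eLpNorm f (ENNReal.ofReal p) volume) →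
        (∀ f : En n → ℝ, MemLp f (ENNReal.ofReal p) volume →
          eLpNorm (fun x => b x * dualHardyOp n f x - dualHardyOp n (fun y => b y * f y) x)
              (ENNReal.ofReal p) volume ≤
            ENNReal.ofReal A * eLpNorm f (ENNReal.ofReal p) volume) →
        ∀ r : ℝ, 0 < r →
          ∫⁻ x in ball (0 : En n) r,
              ENNReal.ofReal (|b x - ⨍ y in ball (0 : En n) r, b y| ^ p) ≤
            ENNReal.ofReal ((C * A) ^ p) * volume (ball (0 : En n) r) := by
  have hp0 : (0:ℝ) < p := lt_trans one_pos hp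
  haveI : Nontrivial (En n) := ⟨⟨EuclideanSpace.single ⟨0, hn⟩ (1:ℝ), 0, by
    intro h
    have := congrArg norm h
    simp [EuclideanSpace.norm_single] at this⟩⟩
  set ν := volume (ball (0 : En n) 1) with hν_def
  have hν0 : ν ≠ 0 := (measure_ball_pos _ _ one_pos).ne'
  have hνt : ν ≠ ⊤ := measure_ball_lt_top.ne
  set v := ν.toReal with hv_def
  have hv : 0 < v := ENNReal.toReal_pos hν0 hνt
  refine ⟨4 / v, by positivity, ?_⟩
  intro b hbm A hA hloc h1 h2 r hr
  set q := ENNReal.ofReal p with hq_def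
  have hq0 : q ≠ 0 := by simp [hq_def, ENNReal.ofReal_eq_zero, not_le, hp0]
  have hqt : q ≠ ⊤ := ENNReal.ofReal_ne_top
  have hqr : q.toReal = p := ENNReal.toReal_ofReal hp0.le
  set B := ball (0 : En n) r with hB_def
  have hBmeas : MeasurableSet B := measurableSet_ball
  have hμB : volume B = ENNReal.ofReal (r ^ n) * ν := by
    rw [hB_def, hν_def, Measure.addHaar_ball _ _ hr.le, finrank_euclideanSpace_fin]
  have hBt : volume B ≠ ⊤ := measure_ball_lt_top.ne
  set β := (volume B).toReal with hβ_def
  have hβ_eq : β = r ^ n * v := by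
    rw [hβ_def, hμB, ENNReal.toReal_mul, ENNReal.toReal_ofReal (by positivity)]
  have hβ : 0 < β := by rw [hβ_eq]; positivity
  have hβ' : β ≠ 0 := hβ.ne'
  have hcb : ∀ t : ℝ, 0 ≤ t → (volume (closedBall (0 : En n) t)).toReal = t ^ n * v := by
    intro t ht
    rw [Measure.addHaar_closedBall _ _ ht, finrank_euclideanSpace_fin, ENNReal.toReal_mul,
      ENNReal.toReal_ofReal (by positivity)]
  set χ : En n → ℝ := Set.indicator B (fun _ => (1:ℝ)) with hχ_def
  set f₀ : En n → ℝ := Set.indicator B (fun y => ‖y‖ ^ n / β) with hf₀_def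
  have hχmem : MemLp χ q volume := memLp_indicator_const q hBmeas 1 (Or.inr hBt)
  have hf₀sm : StronglyMeasurable f₀ :=
    ((continuous_norm.pow n).div_const β).stronglyMeasurable.indicator hBmeas
  have hf₀_le : ∀ x, ‖f₀ x‖ ≤ ‖Set.indicator B (fun _ => r ^ n / β) x‖ := by
    intro x
    show ‖B.indicator (fun y => ‖y‖ ^ n / β) x‖ ≤ _
    by_cases hx : x ∈ B
    · rw [Set.indicator_of_mem hx, Set.indicator_of_mem hx]
      have hxr : ‖x‖ < r := mem_ball_zero_iff.1 hx
      have hxn : ‖x‖ ^ n ≤ r ^ n := pow_le_pow_left₀ (norm_nonneg _) hxr.le n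
      rw [Real.norm_eq_abs, Real.norm_eq_abs, abs_of_nonneg (by positivity),
        abs_of_nonneg (by positivity)]
      gcongr
    · rw [Set.indicator_of_notMem hx, Set.indicator_of_notMem hx]
  have hf₀mem : MemLp f₀ q volume :=
    (memLp_indicator_const q hBmeas (r ^ n / β) (Or.inr hBt)).of_le
      hf₀sm.aestronglyMeasurable (Filter.Eventually.of_forall hf₀_le)
  have hrnβ : r ^ n / β = v⁻¹ := by rw [hβ_eq]; field_simp
  have hχnorm : eLpNorm χ q volume = (volume B) ^ (1/p) := by
    rw [hχ_def, eLpNorm_indicator_const hBmeas hq0 hqt, hqr]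
    simp
  have hf₀norm : eLpNorm f₀ q volume ≤ ENNReal.ofReal v⁻¹ * (volume B) ^ (1/p) := by
    calc eLpNorm f₀ q volume ≤ eLpNorm (Set.indicator B (fun _ => r ^ n / β)) q volume :=
          eLpNorm_mono_ae (Filter.Eventually.of_forall hf₀_le)
      _ = ‖r ^ n / β‖ₑ * (volume B) ^ (1/p) := by
          rw [eLpNorm_indicator_const hBmeas hq0 hqt, hqr]
      _ = ENNReal.ofReal v⁻¹ * (volume B) ^ (1/p) := by
          rw [Real.enorm_eq_ofReal (by positivity), hrnβ]
  set Φ : En n → ℝ := fun x => ∫ y in closedBall (0 : En n) ‖x‖, b y with hΦ_def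
  have hΦm : StronglyMeasurable Φ := sm_phi hbm
  set I := ∫ y in B, b y with hI_def
  set bB := ⨍ y in B, b y with hbB_def
  have hbB : bB = β⁻¹ * I := by
    rw [hbB_def, setAverage_eq, smul_eq_mul, hβ_def, hI_def, measureReal_def]
  have hbint : IntegrableOn b B volume := hloc r hr
  set g1 : En n → ℝ :=
    fun x => b x * hardyOp n χ x - hardyOp n (fun y => b y * χ y) x with hg1_def
  set g2 : En n → ℝ :=
    fun x => b x * dualHardyOp n f₀ x - dualHardyOp n (fun y => b y * f₀ y) x with hg2_def
  -- pointwise formulas on B \ {0}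
  have hg1x : ∀ x ∈ B, x ≠ 0 → g1 x = b x * v - (‖x‖ ^ n)⁻¹ * Φ x := by
    intro x hxB hx0
    have hxr : ‖x‖ < r := mem_ball_zero_iff.1 hxB
    have hxn : (0:ℝ) < ‖x‖ := norm_pos_iff.2 hx0
    have hxpow : (0:ℝ) < ‖x‖ ^ n := by positivity
    have hsub : closedBall (0 : En n) ‖x‖ ⊆ B := by
      rw [hB_def]; exact closedBall_subset_ball hxr
    have hrpow : ‖x‖ ^ (-(n:ℝ)) = (‖x‖ ^ n)⁻¹ := by
      rw [Real.rpow_neg (norm_nonneg x), Real.rpow_natCast]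
    have key1 : hardyOp n χ x = v := by
      simp only [hardyOp]
      have h5 : ∫ y in closedBall (0 : En n) ‖x‖, χ y = ‖x‖ ^ n * v := by
        rw [setIntegral_congr_fun measurableSet_closedBall
          (fun y hy => Set.indicator_of_mem (hsub hy) _), setIntegral_const, smul_eq_mul,
          measureReal_def, hcb _ (norm_nonneg x), mul_one]
      rw [h5, hrpow, ← mul_assoc, inv_mul_cancel₀ hxpow.ne', one_mul]
    have key2 : hardyOp n (fun y => b y * χ y) x = (‖x‖ ^ n)⁻¹ * Φ x := by
      simp only [hardyOp]
      rw [hrpow]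
      congr 1
      show (∫ y in closedBall (0 : En n) ‖x‖, b y * χ y) = ∫ y in closedBall (0 : En n) ‖x‖, b y
      refine setIntegral_congr_fun measurableSet_closedBall fun y hy => ?_
      show b y * B.indicator (fun _ => (1:ℝ)) y = b y
      rw [Set.indicator_of_mem (hsub hy), mul_one]
    show b x * hardyOp n χ x - hardyOp n (fun y => b y * χ y) x = _
    rw [key1, key2]
  have hg2x : ∀ x ∈ B, x ≠ 0 →
      g2 x = b x * ((β - ‖x‖ ^ n * v) * β⁻¹) - (I - Φ x) * β⁻¹ := by
    intro x hxB hx0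
    have hxr : ‖x‖ < r := mem_ball_zero_iff.1 hxB
    have hxn : (0:ℝ) < ‖x‖ := norm_pos_iff.2 hx0
    have hsub : closedBall (0 : En n) ‖x‖ ⊆ B := by
      rw [hB_def]; exact closedBall_subset_ball hxr
    have hS : MeasurableSet {y : En n | ‖x‖ < ‖y‖} :=
      measurableSet_lt measurable_const measurable_norm
    have hSB : {y : En n | ‖x‖ < ‖y‖} ∩ B = B \ closedBall (0 : En n) ‖x‖ := by
      ext y
      simp only [Set.mem_inter_iff, Set.mem_setOf_eq, Set.mem_diff, mem_closedBall_zero_iff,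
        not_le, hB_def]
      tauto
    have hvol : (volume ({y : En n | ‖x‖ < ‖y‖} ∩ B)).toReal = β - ‖x‖ ^ n * v := by
      rw [hSB, measure_diff hsub measurableSet_closedBall.nullMeasurableSet
        measure_closedBall_lt_top.ne,
        ENNReal.toReal_sub_of_le (measure_mono hsub) hBt, hcb _ (norm_nonneg x), hβ_def]
    have key3 : dualHardyOp n f₀ x = (β - ‖x‖ ^ n * v) * β⁻¹ := by
      simp only [dualHardyOp]
      have e1 : ∀ y ∈ {y : En n | ‖x‖ < ‖y‖},
          f₀ y / ‖y‖ ^ n = Set.indicator B (fun _ => β⁻¹) y := by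
        intro y hy
        have hy0 : (0:ℝ) < ‖y‖ := lt_of_le_of_lt (norm_nonneg x) hy
        have hyn : (‖y‖ : ℝ) ^ n ≠ 0 := by positivity
        show B.indicator (fun y => ‖y‖ ^ n / β) y / ‖y‖ ^ n = _
        by_cases hyB : y ∈ B
        · rw [Set.indicator_of_mem hyB, Set.indicator_of_mem hyB]
          field_simp
        · rw [Set.indicator_of_notMem hyB, Set.indicator_of_notMem hyB, zero_div]
      rw [setIntegral_congr_fun hS e1, setIntegral_indicator hBmeas, setIntegral_const,
        smul_eq_mul, measureReal_def, hvol]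
    have key4 : dualHardyOp n (fun y => b y * f₀ y) x = (I - Φ x) * β⁻¹ := by
      simp only [dualHardyOp]
      have e2 : ∀ y ∈ {y : En n | ‖x‖ < ‖y‖},
          b y * f₀ y / ‖y‖ ^ n = Set.indicator B (fun z => b z * β⁻¹) y := by
        intro y hy
        have hy0 : (0:ℝ) < ‖y‖ := lt_of_le_of_lt (norm_nonneg x) hy
        have hyn : (‖y‖ : ℝ) ^ n ≠ 0 := by positivity
        show b y * B.indicator (fun y => ‖y‖ ^ n / β) y / ‖y‖ ^ n = _
        by_cases hyB : y ∈ B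
        · rw [Set.indicator_of_mem hyB, Set.indicator_of_mem hyB]
          field_simp
        · rw [Set.indicator_of_notMem hyB, Set.indicator_of_notMem hyB, mul_zero, zero_div]
      rw [setIntegral_congr_fun hS e2, setIntegral_indicator hBmeas, hSB, integral_mul_const,
        integral_diff measurableSet_closedBall hbint hsub]
    show b x * dualHardyOp n f₀ x - dualHardyOp n (fun y => b y * f₀ y) x = _
    rw [key3, key4]
  have hpt : ∀ x ∈ B, x ≠ 0 → b x - bB = (‖x‖ ^ n * β⁻¹) * g1 x + g2 x := by
    intro x hxB hx0
    have hxn : (0:ℝ) < ‖x‖ := norm_pos_iff.2 hx0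
    have hxpow : (‖x‖ : ℝ) ^ n ≠ 0 := by positivity
    rw [hg1x x hxB hx0, hg2x x hxB hx0, hbB]
    field_simp
    ring
  -- measurability of g1, g2 a.e. on B
  have mb : Measurable b := hbm.measurable
  have hG1 : Measurable fun x : En n => b x * v - (‖x‖ ^ n)⁻¹ * Φ x :=
    (mb.mul_const v).sub (((measurable_norm.pow_const n).inv).mul hΦm.measurable)
  have hG2 : Measurable fun x : En n =>
      b x * ((β - ‖x‖ ^ n * v) * β⁻¹) - (I - Φ x) * β⁻¹ :=
    (mb.mul ((measurable_const.sub ((measurable_norm.pow_const n).mul_const v)).mul_const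
      β⁻¹)).sub ((measurable_const.sub hΦm.measurable).mul_const β⁻¹)
  have h0ae : ∀ᵐ x ∂(volume.restrict B), x ≠ (0 : En n) := by
    refine ae_restrict_of_ae ?_
    have h7 : volume ({(0 : En n)} : Set (En n)) = 0 := measure_singleton 0
    have hs : {a : En n | ¬ a ≠ 0} = {(0 : En n)} := by ext a; simp
    rw [ae_iff, hs]
    exact h7
  have hae1 : g1 =ᵐ[volume.restrict B] fun x => b x * v - (‖x‖ ^ n)⁻¹ * Φ x := by
    filter_upwards [ae_restrict_mem hBmeas, h0ae] with x hxB hx0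
    exact hg1x x hxB hx0
  have hae2 : g2 =ᵐ[volume.restrict B]
      fun x => b x * ((β - ‖x‖ ^ n * v) * β⁻¹) - (I - Φ x) * β⁻¹ := by
    filter_upwards [ae_restrict_mem hBmeas, h0ae] with x hxB hx0
    exact hg2x x hxB hx0
  have hmeas1 : AEMeasurable (fun x => (‖g1 x‖₊ : ℝ≥0∞) ^ p) (volume.restrict B) := by
    refine AEMeasurable.congr ((hG1.enorm.pow_const p).aemeasurable) ?_
    filter_upwards [hae1] with x hx
    rw [hx, enorm_eq_nnnorm]
  -- Lp norm bounds
  set c1 : ℝ≥0∞ := ENNReal.ofReal v⁻¹ with hc1_def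
  have hg1N : (∫⁻ x, (‖g1 x‖₊ : ℝ≥0∞) ^ p) ≤ (ENNReal.ofReal A) ^ p * volume B := by
    rw [lint_eq_eLpNorm_rpow hp0 g1, ← hq_def]
    calc eLpNorm g1 q volume ^ p ≤ (ENNReal.ofReal A * (volume B) ^ (1/p)) ^ p := by
          gcongr
          rw [← hχnorm]
          exact h1 χ hχmem
      _ = (ENNReal.ofReal A) ^ p * volume B := by
          rw [ENNReal.mul_rpow_of_nonneg _ _ hp0.le, enn_rpow_inv_rpow hp0.ne']
  have hg2N : (∫⁻ x, (‖g2 x‖₊ : ℝ≥0∞) ^ p) ≤ c1 ^ p * (ENNReal.ofReal A) ^ p * volume B := by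
    rw [lint_eq_eLpNorm_rpow hp0 g2, ← hq_def]
    calc eLpNorm g2 q volume ^ p
        ≤ (ENNReal.ofReal A * (ENNReal.ofReal v⁻¹ * (volume B) ^ (1/p))) ^ p := by
          gcongr
          exact (h2 f₀ hf₀mem).trans (by gcongr)
      _ = c1 ^ p * (ENNReal.ofReal A) ^ p * volume B := by
          rw [ENNReal.mul_rpow_of_nonneg _ _ hp0.le, ENNReal.mul_rpow_of_nonneg _ _ hp0.le,
            enn_rpow_inv_rpow hp0.ne', hc1_def]
          ring
  -- pointwise ENNReal bound
  have hptE : ∀ᵐ x ∂(volume.restrict B),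
      ENNReal.ofReal (|b x - bB| ^ p) ≤
        (2 ^ p * c1 ^ p) * (‖g1 x‖₊ : ℝ≥0∞) ^ p + 2 ^ p * (‖g2 x‖₊ : ℝ≥0∞) ^ p := by
    filter_upwards [ae_restrict_mem hBmeas, h0ae] with x hxB hx0
    have hid := hpt x hxB hx0
    have hu : ‖x‖ ^ n * β⁻¹ ≤ v⁻¹ := by
      have h1' : ‖x‖ ^ n ≤ r ^ n :=
        pow_le_pow_left₀ (norm_nonneg _) (mem_ball_zero_iff.1 hxB).le n
      rw [hβ_eq]
      calc ‖x‖ ^ n * (r ^ n * v)⁻¹ ≤ r ^ n * (r ^ n * v)⁻¹ := by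
            gcongr
        _ = v⁻¹ := by field_simp
    have hreal : |b x - bB| ≤ v⁻¹ * |g1 x| + |g2 x| := by
      rw [hid]
      refine (abs_add_le _ _).trans ?_
      have habs : |(‖x‖ ^ n * β⁻¹) * g1 x| = (‖x‖ ^ n * β⁻¹) * |g1 x| := by
        rw [abs_mul, abs_of_nonneg (by positivity)]
      rw [habs]
      gcongr
    calc ENNReal.ofReal (|b x - bB| ^ p)
        = (ENNReal.ofReal |b x - bB|) ^ p :=
          (ENNReal.ofReal_rpow_of_nonneg (abs_nonneg _) hp0.le).symm
      _ ≤ (ENNReal.ofReal (v⁻¹ * |g1 x| + |g2 x|)) ^ p := by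
          exact ENNReal.rpow_le_rpow (ENNReal.ofReal_le_ofReal hreal) hp0.le
      _ = (c1 * (‖g1 x‖₊ : ℝ≥0∞) + (‖g2 x‖₊ : ℝ≥0∞)) ^ p := by
          rw [ENNReal.ofReal_add (by positivity) (abs_nonneg _),
            ENNReal.ofReal_mul (by positivity), ← enorm_eq_nnnorm, ← enorm_eq_nnnorm,
            Real.enorm_eq_ofReal_abs, Real.enorm_eq_ofReal_abs, hc1_def]
      _ ≤ 2 ^ p * ((c1 * (‖g1 x‖₊ : ℝ≥0∞)) ^ p + (‖g2 x‖₊ : ℝ≥0∞) ^ p) :=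
          enn_add_rpow_le hp0.le _ _
      _ = (2 ^ p * c1 ^ p) * (‖g1 x‖₊ : ℝ≥0∞) ^ p + 2 ^ p * (‖g2 x‖₊ : ℝ≥0∞) ^ p := by
          rw [ENNReal.mul_rpow_of_nonneg _ _ hp0.le, mul_add, ← mul_assoc]
  have hfin1 : (2 : ℝ≥0∞) ^ p * c1 ^ p ≠ ⊤ :=
    ENNReal.mul_ne_top (ENNReal.rpow_ne_top_of_nonneg hp0.le (by simp))
      (ENNReal.rpow_ne_top_of_nonneg hp0.le ENNReal.ofReal_ne_top)
  have hfin2 : (2 : ℝ≥0∞) ^ p ≠ ⊤ := ENNReal.rpow_ne_top_of_nonneg hp0.le (by simp)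
  have final : (2 ^ p * c1 ^ p) * ((ENNReal.ofReal A) ^ p * volume B)
      + 2 ^ p * (c1 ^ p * (ENNReal.ofReal A) ^ p * volume B)
      ≤ ENNReal.ofReal ((4 / v * A) ^ p) * volume B := by
    have expand : ENNReal.ofReal ((4 / v * A) ^ p)
        = 2 ^ p * 2 ^ p * c1 ^ p * (ENNReal.ofReal A) ^ p := by
      have h4 : (4 : ℝ) / v * A = 2 * 2 * v⁻¹ * A := by ring
      rw [h4, ← ENNReal.ofReal_rpow_of_nonneg (by positivity) hp0.le,
        ENNReal.ofReal_mul (by positivity), ENNReal.ofReal_mul (by positivity),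
        ENNReal.ofReal_mul (by norm_num), ENNReal.ofReal_ofNat,
        ENNReal.mul_rpow_of_nonneg _ _ hp0.le, ENNReal.mul_rpow_of_nonneg _ _ hp0.le,
        ENNReal.mul_rpow_of_nonneg _ _ hp0.le]
    rw [expand]
    have h2le : (2 : ℝ≥0∞) ≤ 2 ^ p := by
      calc (2:ℝ≥0∞) = 2 ^ (1:ℝ) := (ENNReal.rpow_one 2).symm
        _ ≤ 2 ^ p := ENNReal.rpow_le_rpow_of_exponent_le (by norm_num) hp.le
    calc (2 ^ p * c1 ^ p) * ((ENNReal.ofReal A) ^ p * volume B)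
          + 2 ^ p * (c1 ^ p * (ENNReal.ofReal A) ^ p * volume B)
        = 2 * (2 ^ p * c1 ^ p * (ENNReal.ofReal A) ^ p * volume B) := by ring
      _ ≤ 2 ^ p * (2 ^ p * c1 ^ p * (ENNReal.ofReal A) ^ p * volume B) := by gcongr
      _ = 2 ^ p * 2 ^ p * c1 ^ p * (ENNReal.ofReal A) ^ p * volume B := by ring
  refine le_trans (lintegral_mono_ae hptE) ?_
  rw [lintegral_add_left' (hmeas1.const_mul _), lintegral_const_mul' _ _ hfin1,
    lintegral_const_mul' _ _ hfin2]
  refine le_trans (add_le_add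
    (mul_le_mul_right ((setLIntegral_le_lintegral _ _).trans hg1N) _)
    (mul_le_mul_right ((setLIntegral_le_lintegral _ _).trans hg2N) _)) final

/-- If `1 < p < ∞` and both commutators `[b,H]` and `[b,H*]` are
bounded on `L^p(ℝⁿ)` with operator norm at most `A`, then for every ball `B = B(0,r)`
one has `(|B|⁻¹ ∫_B |b − b_B|^p)^{1/p} ≤ C·A`, i.e. `b ∈ CBMO^p(ℝⁿ)`. -/
theorem commutator_bounded_implies_central_bmo (n : ℕ) (hn : 0 < n) (p : ℝ) (hp : 1 < p) :
    ∃ C : ℝ, 0 < C ∧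
      ∀ (b : En n → ℝ) (A : ℝ), 0 ≤ A →
        (∀ r : ℝ, 0 < r → IntegrableOn b (ball (0 : En n) r) volume) →
        (∀ f : En n → ℝ, MemLp f (ENNReal.ofReal p) volume →
          eLpNorm (fun x => b x * hardyOp n f x - hardyOp n (fun y => b y * f y) x)
              (ENNReal.ofReal p) volume ≤
            ENNReal.ofReal A * eLpNorm f (ENNReal.ofReal p) volume) →
        (∀ f : En n → ℝ, MemLp f (ENNReal.ofReal p) volume →
          eLpNorm (fun x => b x * dualHardyOp n f x - dualHardyOp n (fun y => b y * f y) x)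
              (ENNReal.ofReal p) volume ≤
            ENNReal.ofReal A * eLpNorm f (ENNReal.ofReal p) volume) →
        ∀ r : ℝ, 0 < r →
          ∫⁻ x in ball (0 : En n) r,
              ENNReal.ofReal (|b x - ⨍ y in ball (0 : En n) r, b y| ^ p) ≤
            ENNReal.ofReal ((C * A) ^ p) * volume (ball (0 : En n) r) := by
  obtain ⟨C, hC, H⟩ := key_central_bmo n hn p hp
  refine ⟨C, hC, ?_⟩
  intro b A hA hloc h1 h2
  have hbae : AEStronglyMeasurable b volume := by
    rw [← Measure.restrict_univ (μ := volume), ← iUnion_ball_nat_succ (0 : En n)]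
    exact aestronglyMeasurable_iUnion_iff.2 fun k =>
      (hloc (k + 1) (by positivity)).aestronglyMeasurable
  set b' := hbae.mk b with hb'_def
  have hb'm : StronglyMeasurable b' := hbae.stronglyMeasurable_mk
  have hbb' : b =ᵐ[volume] b' := hbae.ae_eq_mk
  have hloc' : ∀ r : ℝ, 0 < r → IntegrableOn b' (ball (0 : En n) r) volume :=
    fun r hr => (hloc r hr).congr (ae_restrict_of_ae hbb')
  have hHeq : ∀ (f : En n → ℝ) (x : En n),
      hardyOp n (fun y => b' y * f y) x = hardyOp n (fun y => b y * f y) x := by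
    intro f x
    simp only [hardyOp]
    congr 1
    refine integral_congr_ae ?_
    filter_upwards [ae_restrict_of_ae hbb'] with y hy
    rw [hy]
  have hDeq : ∀ (f : En n → ℝ) (x : En n),
      dualHardyOp n (fun y => b' y * f y) x = dualHardyOp n (fun y => b y * f y) x := by
    intro f x
    simp only [dualHardyOp]
    refine integral_congr_ae ?_
    filter_upwards [ae_restrict_of_ae hbb'] with y hy
    rw [hy]
  have h1' : ∀ f : En n → ℝ, MemLp f (ENNReal.ofReal p) volume →
      eLpNorm (fun x => b' x * hardyOp n f x - hardyOp n (fun y => b' y * f y) x)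
          (ENNReal.ofReal p) volume ≤
        ENNReal.ofReal A * eLpNorm f (ENNReal.ofReal p) volume := by
    intro f hf
    refine le_trans (le_of_eq (eLpNorm_congr_ae ?_)) (h1 f hf)
    filter_upwards [hbb'] with x hx
    rw [hHeq f x, hx]
  have h2' : ∀ f : En n → ℝ, MemLp f (ENNReal.ofReal p) volume →
      eLpNorm (fun x => b' x * dualHardyOp n f x - dualHardyOp n (fun y => b' y * f y) x)
          (ENNReal.ofReal p) volume ≤
        ENNReal.ofReal A * eLpNorm f (ENNReal.ofReal p) volume := by
    intro f hf
    refine le_trans (le_of_eq (eLpNorm_congr_ae ?_)) (h2 f hf)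
    filter_upwards [hbb'] with x hx
    rw [hDeq f x, hx]
  intro r hr
  have hres := H b' hb'm A hA hloc' h1' h2' r hr
  have havg : (⨍ y in ball (0 : En n) r, b y) = ⨍ y in ball (0 : En n) r, b' y := by
    rw [setAverage_eq, setAverage_eq, integral_congr_ae (ae_restrict_of_ae hbb')]
  calc ∫⁻ x in ball (0 : En n) r,
        ENNReal.ofReal (|b x - ⨍ y in ball (0 : En n) r, b y| ^ p)
      = ∫⁻ x in ball (0 : En n) r,
          ENNReal.ofReal (|b' x - ⨍ y in ball (0 : En n) r, b' y| ^ p) := by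
        refine lintegral_congr_ae ?_
        filter_upwards [ae_restrict_of_ae hbb'] with x hx
        rw [hx, havg]
    _ ≤ ENNReal.ofReal ((C * A) ^ p) * volume (ball (0 : En n) r) := hres
end

section
/- For every x in the ball B = B(0,r) ⊂ ℝⁿ and every locally integrable b, one has the pointwise bound |b(x) − b_B| ≤ C_n ( |[b,H](χ_B)(x)| + |[b,H*](f₀)(x)| ), where f₀(y) = |y|^n |B|^{-1} χ_B(y) and C_n depends only on n. -/
open MeasureTheory Metric

/-- For every `x` in `B = B(0,r)` and locally integrable `b`,
`|b(x) − b_B| ≤ C_n (|[b,H](χ_B)(x)| + |[b,H*](f₀)(x)|)`, where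
`f₀(y) = |y|^n |B|⁻¹ χ_B(y)` and `[b,T]f = b·Tf − T(bf)`. -/
theorem pointwise_commutator_bound (n : ℕ) (hn : 0 < n) :
    ∃ C : ℝ, 0 < C ∧
      ∀ (b : En n → ℝ) (r : ℝ), 0 < r →
        IntegrableOn b (ball (0 : En n) r) volume →
        ∀ x ∈ ball (0 : En n) r,
          |b x - ⨍ y in ball (0 : En n) r, b y| ≤
            C * (|b x * hardyOp n ((ball (0 : En n) r).indicator fun _ => (1 : ℝ)) x -
                    hardyOp n (fun y =>
                      b y * (ball (0 : En n) r).indicator (fun _ => (1 : ℝ)) y) x| +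
                 |b x * dualHardyOp n ((ball (0 : En n) r).indicator fun y =>
                        ‖y‖ ^ n / (volume (ball (0 : En n) r)).toReal) x -
                    dualHardyOp n (fun y =>
                      b y * (ball (0 : En n) r).indicator (fun y =>
                        ‖y‖ ^ n / (volume (ball (0 : En n) r)).toReal) y) x|) := by
  set c := (volume (ball (0 : En n) 1)).toReal with hcdef
  have hc0 : 0 < c := ENNReal.toReal_pos (measure_ball_pos volume 0 one_pos).ne'
    measure_ball_lt_top.ne
  refine ⟨c⁻¹ + 1, by positivity, ?_⟩
  intro b r hr hb x hx
  set B := ball (0 : En n) r with hBdef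
  set v := (volume B).toReal with hvdef
  have hfr : Module.finrank ℝ (En n) = n := finrank_euclideanSpace_fin
  have hvol : volume B = ENNReal.ofReal (r ^ n) * volume (ball (0 : En n) 1) := by
    rw [hBdef, Measure.addHaar_ball_of_pos volume 0 hr, hfr]
  have hveq : v = r ^ n * c := by
    rw [hvdef, hvol, ENNReal.toReal_mul, ENNReal.toReal_ofReal (by positivity)]
  have hv0 : 0 < v := by rw [hveq]; positivity
  set A := closedBall (0 : En n) ‖x‖ with hAdef
  set S := {y : En n | ‖x‖ < ‖y‖} with hSdef
  have hxr : ‖x‖ < r := mem_ball_zero_iff.mp hx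
  have hAB : A ⊆ B := closedBall_subset_ball hxr
  have hSmeas : MeasurableSet S := (isOpen_lt continuous_const continuous_norm).measurableSet
  have hAmeas : MeasurableSet A := measurableSet_closedBall
  have hBmeas : MeasurableSet B := measurableSet_ball
  have hsplit : B = A ∪ (S ∩ B) := by
    ext y
    simp only [Set.mem_union, Set.mem_inter_iff, hAdef, hSdef, Set.mem_setOf_eq,
      mem_closedBall_zero_iff]
    constructor
    · intro hy
      rcases le_or_gt ‖y‖ ‖x‖ with h | h
      · exact Or.inl h
      · exact Or.inr ⟨h, hy⟩
    · rintro (h | ⟨_, h⟩)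
      · exact hAB (mem_closedBall_zero_iff.mpr h)
      · exact h
  have hdisj : Disjoint A (S ∩ B) := by
    rw [Set.disjoint_left]
    rintro y hyA ⟨hyS, -⟩
    exact absurd (mem_closedBall_zero_iff.mp hyA) (not_le.mpr hyS)
  -- volume accounting
  have hBfin : volume B ≠ ⊤ := measure_ball_lt_top.ne
  have hAfin : volume A ≠ ⊤ := (measure_mono hAB).trans_lt measure_ball_lt_top |>.ne
  have hSBfin : volume (S ∩ B) ≠ ⊤ :=
    (measure_mono Set.inter_subset_right).trans_lt measure_ball_lt_top |>.ne
  have hvsplit : v = (volume A).toReal + (volume (S ∩ B)).toReal := by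
    have h1 : volume B = volume A + volume (S ∩ B) := by
      conv_lhs => rw [hsplit]
      exact measure_union hdisj (hSmeas.inter hBmeas)
    rw [hvdef, h1, ENNReal.toReal_add hAfin hSBfin]
  -- integral accounting
  have hbA : IntegrableOn b A volume := hb.mono_set hAB
  have hbSB : IntegrableOn b (S ∩ B) volume := hb.mono_set Set.inter_subset_right
  have hisplit : ∫ y in B, b y = (∫ y in A, b y) + ∫ y in S ∩ B, b y := by
    conv_lhs => rw [hsplit]
    exact setIntegral_union hdisj (hSmeas.inter hBmeas) hbA hbSB
  -- Hardy operator values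
  have H1 : hardyOp n (B.indicator fun _ => (1 : ℝ)) x
      = ‖x‖ ^ (-(n : ℝ)) * (volume A).toReal := by
    rw [hardyOp]
    congr 1
    rw [setIntegral_congr_fun hAmeas (g := fun _ => (1 : ℝ))
      (fun y hy => Set.indicator_of_mem (hAB hy) _), setIntegral_const, smul_eq_mul, mul_one]; rfl
  have H2 : hardyOp n (fun y => b y * B.indicator (fun _ => (1 : ℝ)) y) x
      = ‖x‖ ^ (-(n : ℝ)) * ∫ y in A, b y := by
    rw [hardyOp]
    congr 1
    refine setIntegral_congr_fun hAmeas (fun y hy => ?_)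
    simp [Set.indicator_of_mem (hAB hy)]
  set T1 := b x * hardyOp n (B.indicator fun _ => (1 : ℝ)) x -
      hardyOp n (fun y => b y * B.indicator (fun _ => (1 : ℝ)) y) x with hT1def
  have hIA : ‖x‖ ^ n * T1 = b x * (volume A).toReal - ∫ y in A, b y := by
    rw [hT1def, H1, H2]
    rcases eq_or_ne x 0 with rfl | hx0
    · have hA0 : volume A = 0 := by
        rw [hAdef, norm_zero, Measure.addHaar_closedBall volume 0 le_rfl, hfr]
        simp [zero_pow hn.ne']
      have hi0 : ∫ y in A, b y = 0 := by
        rw [Measure.restrict_eq_zero.mpr hA0, integral_zero_measure]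
      rw [hA0, hi0]
      simp [zero_pow hn.ne']
    · have hxpos : (0 : ℝ) < ‖x‖ := norm_pos_iff.mpr hx0
      have : ‖x‖ ^ (-(n : ℝ)) = (‖x‖ ^ n)⁻¹ := by
        rw [Real.rpow_neg (norm_nonneg x), Real.rpow_natCast]
      rw [this]
      field_simp
  -- dual Hardy operator values
  have hSpos : ∀ y ∈ S, (0 : ℝ) < ‖y‖ := fun y hy => lt_of_le_of_lt (norm_nonneg x) hy
  have D1 : dualHardyOp n (B.indicator fun y => ‖y‖ ^ n / v) x
      = v⁻¹ * (volume (S ∩ B)).toReal := by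
    rw [dualHardyOp, ← hSdef]
    have : ∀ y ∈ S, B.indicator (fun y => ‖y‖ ^ n / v) y / ‖y‖ ^ n
        = B.indicator (fun _ => v⁻¹) y := by
      intro y hy
      have hy0 : (‖y‖ : ℝ) ^ n ≠ 0 := (pow_pos (hSpos y hy) n).ne'
      by_cases hyB : y ∈ B
      · rw [Set.indicator_of_mem hyB, Set.indicator_of_mem hyB]
        field_simp
      · rw [Set.indicator_of_notMem hyB, Set.indicator_of_notMem hyB, zero_div]
    rw [setIntegral_congr_fun hSmeas this, setIntegral_indicator hBmeas, setIntegral_const,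
      smul_eq_mul, mul_comm]; rfl
  have D2 : dualHardyOp n (fun y => b y * B.indicator (fun y => ‖y‖ ^ n / v) y) x
      = v⁻¹ * ∫ y in S ∩ B, b y := by
    rw [dualHardyOp, ← hSdef]
    have : ∀ y ∈ S, (b y * B.indicator (fun y => ‖y‖ ^ n / v) y) / ‖y‖ ^ n
        = B.indicator (fun y => b y * v⁻¹) y := by
      intro y hy
      have hy0 : (‖y‖ : ℝ) ^ n ≠ 0 := (pow_pos (hSpos y hy) n).ne'
      by_cases hyB : y ∈ B
      · rw [Set.indicator_of_mem hyB, Set.indicator_of_mem hyB]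
        field_simp
      · rw [Set.indicator_of_notMem hyB, Set.indicator_of_notMem hyB, mul_zero, zero_div]
    rw [setIntegral_congr_fun hSmeas this, setIntegral_indicator hBmeas, integral_mul_const,
      mul_comm]
  set T2 := b x * dualHardyOp n (B.indicator fun y => ‖y‖ ^ n / v) x -
      dualHardyOp n (fun y => b y * B.indicator (fun y => ‖y‖ ^ n / v) y) x with hT2def
  have hIS : T2 = v⁻¹ * (b x * (volume (S ∩ B)).toReal - ∫ y in S ∩ B, b y) := by
    rw [hT2def, D1, D2]; ring
  -- the average
  have havg : ⨍ y in B, b y = v⁻¹ * ∫ y in B, b y := by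
    rw [setAverage_eq, smul_eq_mul, hvdef]; rfl
  -- key identity
  have hkey : b x - ⨍ y in B, b y = v⁻¹ * ‖x‖ ^ n * T1 + T2 := by
    have h1 : v⁻¹ * ‖x‖ ^ n * T1 = v⁻¹ * (b x * (volume A).toReal - ∫ y in A, b y) := by
      rw [mul_assoc, hIA]
    rw [h1, hIS, havg, hisplit]
    have : b x = v⁻¹ * (b x * v) := by field_simp
    nth_rewrite 1 [this]
    rw [hvsplit]
    ring
  -- final estimate
  rw [hkey]
  have habs : |v⁻¹ * ‖x‖ ^ n * T1 + T2| ≤ v⁻¹ * ‖x‖ ^ n * |T1| + |T2| := by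
    calc |v⁻¹ * ‖x‖ ^ n * T1 + T2| ≤ |v⁻¹ * ‖x‖ ^ n * T1| + |T2| := abs_add_le _ _
    _ = v⁻¹ * ‖x‖ ^ n * |T1| + |T2| := by
        rw [abs_mul, abs_of_nonneg (by positivity)]
  refine habs.trans ?_
  have hco : v⁻¹ * ‖x‖ ^ n ≤ c⁻¹ := by
    rw [hveq, mul_inv]
    have hxn : ‖x‖ ^ n ≤ r ^ n := pow_le_pow_left₀ (norm_nonneg x) hxr.le n
    calc (r ^ n)⁻¹ * c⁻¹ * ‖x‖ ^ n ≤ (r ^ n)⁻¹ * c⁻¹ * r ^ n := by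
          apply mul_le_mul_of_nonneg_left hxn (by positivity)
    _ = c⁻¹ := by field_simp
  have h1 : (0:ℝ) ≤ |T1| := abs_nonneg _
  have h2 : (0:ℝ) ≤ |T2| := abs_nonneg _
  have h3 : (0:ℝ) ≤ c⁻¹ * |T2| := mul_nonneg (inv_nonneg.mpr hc0.le) h2
  nlinarith [mul_le_mul_of_nonneg_right hco h1]
end
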